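/- Let H be a complex Hilbert space and A a von Neumann algebra on H whose commutant C = A' is abelian. Fix ξ ∈ H and let E be the orthogonal projection onto the closure of {Bξ : B ∈ C}. Let X be a bounded operator on H commuting with every element of C. Then for every A ∈ A with Aξ = 0 one has A(E X ξ) = 0. Consequently the assignment Aξ ↦ A E X ξ (A ∈ A) is a well-defined linear map on the subspace {Aξ : A ∈ A}. -/

import Mathlib

/-- The orthogonal projection of `H` onto the closure of the subspace spanned by `S`,
viewed as a bounded operator on `H`. -/
noncomputable def projCl {H : Type*} [NormedAddCommGroup H] [InnerProductSpace ℂ H]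
    [CompleteSpace H] (S : Set H) : H →L[ℂ] H :=
  haveI : CompleteSpace ((Submodule.span ℂ S).topologicalClosure) :=
    ((Submodule.span ℂ S).isClosed_topologicalClosure).completeSpace_coe
  ((Submodule.span ℂ S).topologicalClosure).subtypeL.comp
    (Submodule.orthogonalProjection ((Submodule.span ℂ S).topologicalClosure))

/-- The orthogonal projection `E` onto the closure of `{Bξ : B ∈ A'}`, where `A'` is the
commutant of the von Neumann algebra `A`. -/
noncomputable def cyclicProj {H : Type*} [NormedAddCommGroup H] [InnerProductSpace ℂ H]
    [CompleteSpace H] (A : VonNeumannAlgebra H) (ξ : H) : H →L[ℂ] H :=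
  projCl ((fun B : H →L[ℂ] H => B ξ) '' (A.commutant : Set (H →L[ℂ] H)))

lemma cyclicProj_mem_closure {H : Type*} [NormedAddCommGroup H] [InnerProductSpace ℂ H]
    [CompleteSpace H] (A : VonNeumannAlgebra H) (ξ x : H) :
    cyclicProj A ξ x ∈ (Submodule.span ℂ
      ((fun B : H →L[ℂ] H => B ξ) '' (A.commutant : Set (H →L[ℂ] H)))).topologicalClosure := by
  simp only [cyclicProj, projCl, ContinuousLinearMap.coe_comp', Function.comp_apply,
    Submodule.subtypeL_apply]
  exact Subtype.coe_prop _

/-- (Well-definedness of formula (3.5) in Theorem 3.) If the commutant `C = A'` is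
abelian, `E` the orthogonal projection onto the closure of `{Bξ : B ∈ C}`, and `X` a
bounded operator commuting with every element of `C`, then `A ∈ A` with `Aξ = 0` implies
`A(E X ξ) = 0`; consequently `Aξ ↦ A E X ξ` is well defined on `{Aξ : A ∈ A}`. -/
theorem cyclicProj_welldefined_conditional_expectation
    {H : Type*} [NormedAddCommGroup H] [InnerProductSpace ℂ H] [CompleteSpace H]
    (A : VonNeumannAlgebra H)
    (habelian : ∀ b₁ ∈ A.commutant, ∀ b₂ ∈ A.commutant, b₁ * b₂ = b₂ * b₁)
    (ξ : H) (X : H →L[ℂ] H)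
    (hX : ∀ B ∈ A.commutant, X * B = B * X) :
    (∀ a ∈ A, a ξ = 0 → a (cyclicProj A ξ (X ξ)) = 0) ∧
      ∀ a ∈ A, ∀ a' ∈ A, a ξ = a' ξ →
        a (cyclicProj A ξ (X ξ)) = a' (cyclicProj A ξ (X ξ)) := by
  have key : ∀ a : H →L[ℂ] H, a ∈ A → a ξ = 0 → a (cyclicProj A ξ (X ξ)) = 0 := by
    intro a ha haξ
    have hmem := cyclicProj_mem_closure A ξ (X ξ)
    -- the kernel of `a` as a closed submodule contains the span of `{Bξ}`
    have hker : (Submodule.span ℂ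
        ((fun B : H →L[ℂ] H => B ξ) '' (A.commutant : Set (H →L[ℂ] H)))).topologicalClosure
        ≤ LinearMap.ker (a : H →ₗ[ℂ] H) := by
      apply Submodule.topologicalClosure_minimal
      · rw [Submodule.span_le]
        rintro _ ⟨B, hB, rfl⟩
        have hcomm : a * B = B * a := VonNeumannAlgebra.mem_commutant_iff.mp hB a ha
        have : a (B ξ) = B (a ξ) := by
          have := congrArg (fun T : H →L[ℂ] H => T ξ) hcomm
          simpa using this
        simp [LinearMap.mem_ker, this, haξ]
      · exact ContinuousLinearMap.isClosed_ker a
    exact hker hmem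
  refine ⟨key, ?_⟩
  intro a ha a' ha' hEq
  have hsub : (a - a') ∈ A := sub_mem ha ha'
  have := key (a - a') hsub (by simp [hEq])
  simpa [sub_eq_zero] using this
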